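/- Let n ≥ 1 and k ≥ 12 be integers, ω = exp(2π√−1/n), let f ∈ ℂ with |f| = 1, set t_j = f·ω^j for 0 ≤ j < n, and let s_0, …, s_{m−1} ∈ ℂ. Fix q ∈ {0, …, k−1}, set φ_q = 2πq/k and c_q = exp((φ_q + π/k)√−1), let J = { j : t_j = exp(ψ√−1) with ψ ≡ φ_q + μ (mod 2π) for some 0 ≤ μ < 2π/k } and I = { i : s_i ∉ Γ′_q }, where Γ′_q = { r·exp(ψ√−1) : r ≥ 0, ψ ≡ φ_q − 2π/k + μ (mod 2π), 0 ≤ μ < 6π/k }. Set θ = 2·sin(π/(2k))/sin(3π/k). Then s_i ≠ t_j for all i ∈ I, j ∈ J, and for every positive integer ρ there exist matrices F ∈ ℂ^{I×ρ} and G ∈ ℂ^{J×ρ} such that |1/(s_i − t_j) − (F·G^T)_{ij}| ≤ θ^ρ/((1 − θ)·sin(3π/k)) for all i ∈ I and j ∈ J; i.e., the admissible block (1/(s_i − t_j))_{i∈I, j∈J} of the CV matrix C_{s,f} admits a rank-≤ρ approximation with this entrywise error bound. -/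

import Mathlib

open Complex in
lemma cv_aux_chord (a b η : ℝ) (hη0 : 0 ≤ η) (hη : η ≤ Real.pi / 2)
    (h1 : |a - b| ≤ 2 * η) :
    ‖Complex.exp ((a:ℂ) * Complex.I) - Complex.exp ((b:ℂ) * Complex.I)‖
      ≤ 2 * Real.sin η := by
  have hπ := Real.pi_pos
  have hsη : 0 ≤ Real.sin η := Real.sin_nonneg_of_nonneg_of_le_pi hη0 (by linarith)
  have hsq : ‖Complex.exp ((a:ℂ) * Complex.I) - Complex.exp ((b:ℂ) * Complex.I)‖ ^ 2
      = 2 - 2 * Real.cos (a - b) := by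
    rw [Complex.sq_norm, Complex.normSq_apply]
    simp only [Complex.sub_re, Complex.sub_im, Complex.exp_ofReal_mul_I_re,
      Complex.exp_ofReal_mul_I_im]
    rw [Real.cos_sub]
    linear_combination (Real.sin_sq_add_cos_sq a) + (Real.sin_sq_add_cos_sq b)
  have hcos : Real.cos (2 * η) ≤ Real.cos (a - b) := by
    rw [← Real.cos_abs (a - b)]
    exact Real.cos_le_cos_of_nonneg_of_le_pi (abs_nonneg _) (by linarith) h1
  have hid : 2 - 2 * Real.cos (2 * η) = (2 * Real.sin η) ^ 2 := by
    rw [Real.cos_two_mul]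
    linear_combination (-4 : ℝ) * (Real.sin_sq_add_cos_sq η)
  have hle : ‖Complex.exp ((a:ℂ) * Complex.I) - Complex.exp ((b:ℂ) * Complex.I)‖ ^ 2
      ≤ (2 * Real.sin η) ^ 2 := by rw [hsq, ← hid]; linarith
  have h2 := Real.sqrt_le_sqrt hle
  rwa [Real.sqrt_sq (norm_nonneg _), Real.sqrt_sq (by linarith)] at h2

lemma cv_sector_dist (c δ : ℝ) (hδ1 : 0 < δ) (hδ2 : δ ≤ Real.pi / 4) (w : ℂ)
    (hw : ‖w - Complex.exp ((c:ℂ) * Complex.I)‖ < Real.sin δ) :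
    ∃ ψ : ℝ, |ψ| < δ ∧ w = (‖w‖ : ℂ) * Complex.exp (((c + ψ : ℝ) : ℂ) * Complex.I) := by
  have hπ := Real.pi_pos
  have hsδ : 0 < Real.sin δ := Real.sin_pos_of_pos_of_lt_pi hδ1 (by linarith)
  set e : ℂ := Complex.exp ((c:ℂ) * Complex.I) with he
  have habse : ‖e‖ = 1 := Complex.norm_exp_ofReal_mul_I c
  have he0 : e ≠ 0 := Complex.exp_ne_zero _
  set w' : ℂ := w / e with hw'
  have h1 : ‖w' - 1‖ < Real.sin δ := by
    have h2 : w' - 1 = (w - e) / e := by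
      rw [hw', sub_div, div_self he0]
    rw [h2, norm_div, habse, div_one]; exact hw
  set r := ‖w'‖ with hr
  set ψ := Complex.arg w' with hψdef
  have hw'' : (r:ℂ) * Complex.exp ((ψ:ℂ) * Complex.I) = w' := Complex.norm_mul_exp_arg_mul_I w'
  have hr0 : (0:ℝ) ≤ r := norm_nonneg w'
  have hsq : ‖w' - 1‖ ^ 2 = (r - Real.cos ψ) ^ 2 + Real.sin ψ ^ 2 := by
    rw [← hw'', Complex.sq_norm, Complex.normSq_apply]
    simp only [Complex.sub_re, Complex.sub_im, Complex.mul_re, Complex.mul_im,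
      Complex.ofReal_re, Complex.ofReal_im, Complex.exp_ofReal_mul_I_re,
      Complex.exp_ofReal_mul_I_im, Complex.one_re, Complex.one_im]
    linear_combination (r ^ 2 - 1) * (Real.sin_sq_add_cos_sq ψ)
  have hψlt : |ψ| < δ := by
    by_contra hcon
    push_neg at hcon
    have hψ1 : -Real.pi < ψ := Complex.neg_pi_lt_arg w'
    have hψ2 : ψ ≤ Real.pi := Complex.arg_le_pi w'
    have hlow : Real.sin δ ^ 2 ≤ ‖w' - 1‖ ^ 2 := by
      rcases le_or_gt (Real.cos ψ) 0 with hc | hc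
      · have h2 : 1 ≤ (r - Real.cos ψ) ^ 2 + Real.sin ψ ^ 2 := by
          nlinarith [Real.sin_sq_add_cos_sq ψ, mul_nonneg hr0 (neg_nonneg.mpr hc), sq_nonneg r]
        have h3 := Real.sin_le_one δ
        nlinarith [hsq]
      · have hup : ψ < Real.pi / 2 := by
          by_contra h'; push_neg at h'
          have := Real.cos_nonpos_of_pi_div_two_le_of_le h' (by linarith)
          linarith
        have hdown : -(Real.pi / 2) < ψ := by
          by_contra h'; push_neg at h'
          have h4 : Real.cos (-ψ) ≤ 0 :=
            Real.cos_nonpos_of_pi_div_two_le_of_le (by linarith) (by linarith)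
          rw [Real.cos_neg] at h4; linarith
        have hsin2 : Real.sin δ ^ 2 ≤ Real.sin ψ ^ 2 := by
          rcases le_abs.mp hcon with h' | h'
          · have h5 : Real.sin δ ≤ Real.sin ψ :=
              Real.sin_le_sin_of_le_of_le_pi_div_two (by linarith) hup.le h'
            nlinarith
          · have h5 : Real.sin δ ≤ Real.sin (-ψ) :=
              Real.sin_le_sin_of_le_of_le_pi_div_two (by linarith) (by linarith) h'
            rw [Real.sin_neg] at h5; nlinarith
        nlinarith [sq_nonneg (r - Real.cos ψ)]
    nlinarith [norm_nonneg (w' - 1)]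
  refine ⟨ψ, hψlt, ?_⟩
  have habsw : ‖w‖ = r := by rw [hr, hw', norm_div, habse, div_one]
  have hwe : w = w' * e := by rw [hw', div_mul_cancel₀ _ he0]
  rw [habsw, hwe, ← hw'', he, mul_assoc, ← Complex.exp_add]
  rw [show ((c + ψ : ℝ) : ℂ) * Complex.I = (ψ:ℂ) * Complex.I + (c:ℂ) * Complex.I by
    push_cast; ring]

lemma cv_geom_id (a b : ℂ) (ha : a ≠ 0) (hab : a - b ≠ 0) (ρ : ℕ) :
    (a - b)⁻¹ - ∑ ν ∈ Finset.range ρ, (a⁻¹) ^ (ν + 1) * b ^ ν = (b / a) ^ ρ * (a - b)⁻¹ := by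
  induction ρ with
  | zero => simp
  | succ ρ ih =>
    rw [Finset.sum_range_succ, ← sub_sub, ih, pow_succ, pow_succ]
    field_simp
    ring

set_option maxHeartbeats 1000000 in
/-- Corollary 7.2 of the paper: every admissible block of a CV matrix
`C_{s,f} = (1/(s_i - f ω^j))`, `|f| = 1`, given by the uniform `k`-partition of
the complex plane (`k ≥ 12`), admits a rank-`≤ ρ` approximation `F·Gᵀ` with
entrywise error at most `θ^ρ/((1 - θ) sin(3π/k))`, where
`θ = 2 sin(π/(2k))/sin(3π/k)`. The block has columns indexed by the knots
`t_j = f ω^j` on the `q`-th arc and rows indexed by the knots `s_i` outside the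
union `Γ'_q` of the `q`-th sector and its two adjacent sectors. -/
theorem cv_admissible_block_low_rank (m n k : ℕ) (hn : 1 ≤ n) (hk : 12 ≤ k)
    (ω : ℂ) (hω : ω = Complex.exp (2 * Real.pi * Complex.I / n))
    (f : ℂ) (hf : ‖f‖ = 1)
    (t : Fin n → ℂ) (ht : ∀ j, t j = f * ω ^ (j : ℕ))
    (s : Fin m → ℂ)
    (q : ℕ) (hq : q < k)
    (φq : ℝ) (hφq : φq = 2 * Real.pi * q / k)
    (cq : ℂ) (hcq : cq = Complex.exp ((φq + Real.pi / k) * Complex.I))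
    (J : Set (Fin n))
    (hJ : J = {j | ∃ μ : ℝ, 0 ≤ μ ∧ μ < 2 * Real.pi / k ∧
      t j = Complex.exp ((φq + μ) * Complex.I)})
    (I : Set (Fin m))
    (hI : I = {i | s i ∉ {w : ℂ | ∃ r : ℝ, 0 ≤ r ∧ ∃ μ : ℝ, 0 ≤ μ ∧ μ < 6 * Real.pi / k ∧
        w = r * Complex.exp ((φq - 2 * Real.pi / k + μ) * Complex.I)}})
    (θ : ℝ) (hθ : θ = 2 * Real.sin (Real.pi / (2 * k)) / Real.sin (3 * Real.pi / k)) :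
    (∀ i ∈ I, ∀ j ∈ J, s i ≠ t j) ∧
      ∀ ρ : ℕ, 1 ≤ ρ →
        ∃ (F : I → Fin ρ → ℂ) (G : J → Fin ρ → ℂ),
          ∀ (i : I) (j : J),
            ‖(s i.1 - t j.1)⁻¹ - ∑ ν : Fin ρ, F i ν * G j ν‖ ≤
              θ ^ ρ / ((1 - θ) * Real.sin (3 * Real.pi / k)) := by
  have hπ := Real.pi_pos
  have hk12 : (12:ℝ) ≤ (k:ℕ) := by exact_mod_cast hk
  have hk0 : (0:ℝ) < (k:ℕ) := by linarith
  have h3k_pos : 0 < 3 * Real.pi / (k:ℕ) := by positivity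
  have h3k_le : 3 * Real.pi / (k:ℕ) ≤ Real.pi / 4 := by
    rw [div_le_div_iff₀ hk0 (by norm_num)]
    nlinarith
  set s3 : ℝ := Real.sin (3 * Real.pi / (k:ℕ)) with hs3def
  set s1 : ℝ := Real.sin (Real.pi / (2 * (k:ℕ))) with hs1def
  have hs3 : 0 < s3 := Real.sin_pos_of_pos_of_lt_pi h3k_pos (by linarith)
  have hs1nn : 0 ≤ s1 := Real.sin_nonneg_of_nonneg_of_le_pi (by positivity)
    (by rw [div_le_iff₀ (by positivity)]; nlinarith)
  have hθ0 : 0 ≤ θ := by rw [hθ]; exact div_nonneg (by linarith) hs3.le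
  have hJor : 6 / (k:ℝ) ≤ s3 := by
    have h6 : (6:ℝ) / k = 2 / Real.pi * (3 * Real.pi / k) := by field_simp; ring
    rw [hs3def, h6]
    exact Real.mul_le_sin h3k_pos.le (by linarith)
  have hs1le : 2 * s1 ≤ Real.pi / (k:ℕ) := by
    have h0 := Real.sin_le (x := Real.pi / (2 * (k:ℕ))) (by positivity)
    have h2 : 2 * (Real.pi / (2 * (k:ℕ))) = Real.pi / (k:ℕ) := by field_simp
    rw [hs1def]
    linarith
  have hθ1 : θ < 1 := by
    rw [hθ, div_lt_one hs3]
    have hπ6 : Real.pi / (k:ℝ) < 6 / k := by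
      rw [div_lt_div_iff₀ hk0 hk0]
      nlinarith [Real.pi_lt_d2]
    linarith
  have hθs3 : θ * s3 = 2 * s1 := by rw [hθ]; field_simp
  -- column knots are close to the arc center
  have hB : ∀ j ∈ J, ‖t j - cq‖ ≤ 2 * s1 := by
    intro j hj
    rw [hJ] at hj
    obtain ⟨μ, hμ0, hμ2, htj⟩ := hj
    rw [htj, hcq,
      show ((φq:ℂ) + ↑μ) * Complex.I = ((φq + μ : ℝ) : ℂ) * Complex.I from by push_cast; ring,
      show ((φq:ℂ) + ↑Real.pi / (k:ℕ)) * Complex.I = ((φq + Real.pi / k : ℝ) : ℂ) * Complex.I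
        from by push_cast; ring]
    apply cv_aux_chord _ _ _ (by positivity)
    · rw [div_le_div_iff₀ (by positivity) (by norm_num)]; nlinarith
    · have h2 : 2 * (Real.pi / (2 * (k:ℕ))) = Real.pi / (k:ℕ) := by field_simp
      rw [h2, abs_le]
      have h3 : (2:ℝ) * Real.pi / k = 2 * (Real.pi / k) := by ring
      rw [h3] at hμ2
      have h4 : (0:ℝ) ≤ Real.pi / k := by positivity
      constructor <;> [skip; skip] <;> nlinarith
  -- row knots are far from the arc center
  have hA : ∀ i ∈ I, s3 ≤ ‖s i - cq‖ := by
    intro i hi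
    by_contra hcon
    push_neg at hcon
    rw [hI] at hi
    apply hi
    have hcast : cq = Complex.exp (((φq + Real.pi / k : ℝ) : ℂ) * Complex.I) := by
      rw [hcq]; congr 1; push_cast; ring
    obtain ⟨ψ, hψ, hwrit⟩ := cv_sector_dist (φq + Real.pi / k) (3 * Real.pi / (k:ℕ)) h3k_pos
      h3k_le (s i) (by rw [← hcast]; exact hcon)
    obtain ⟨hψ1, hψ2⟩ := abs_lt.mp hψ
    have h6k : (6:ℝ) * Real.pi / k = 2 * (3 * Real.pi / k) := by ring
    refine ⟨‖s i‖, norm_nonneg _, ψ + 3 * Real.pi / k,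
      by linarith, by linarith, ?_⟩
    rw [show ((φq:ℂ) - 2 * (Real.pi:ℂ) / (k:ℕ) + ((ψ + 3 * Real.pi / (k:ℕ) : ℝ):ℂ)) * Complex.I
        = ((φq + Real.pi / (k:ℕ) + ψ : ℝ):ℂ) * Complex.I from by push_cast; ring]
    exact hwrit
  -- separation of the knots
  have hsep : ∀ i ∈ I, ∀ j ∈ J, (1 - θ) * s3 ≤ ‖s i - t j‖ := by
    intro i hi j hj
    have h1 := hA i hi
    have h2 := hB j hj
    have h3 := norm_sub_le_norm_sub_add_norm_sub (s i) (t j) cq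
    nlinarith
  have hpos : 0 < (1 - θ) * s3 := mul_pos (by linarith) hs3
  constructor
  · intro i hi j hj heq
    have h1 := hsep i hi j hj
    rw [heq, sub_self] at h1
    simp at h1
    linarith
  · intro ρ hρ
    refine ⟨fun i ν => ((s i.1 - cq)⁻¹) ^ ((ν : ℕ) + 1), fun j ν => (t j.1 - cq) ^ (ν : ℕ), ?_⟩
    intro i j
    set a : ℂ := s i.1 - cq with hadef
    set b : ℂ := t j.1 - cq with hbdef
    have ha : s3 ≤ ‖a‖ := hA i.1 i.2
    have hb : ‖b‖ ≤ 2 * s1 := hB j.1 j.2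
    have hsepij : (1 - θ) * s3 ≤ ‖s i.1 - t j.1‖ := hsep i.1 i.2 j.1 j.2
    have ha0 : a ≠ 0 := by
      intro h; rw [h] at ha; simp at ha; linarith
    have hab : a - b = s i.1 - t j.1 := by rw [hadef, hbdef]; ring
    have hab0 : a - b ≠ 0 := by
      intro h
      have h1 : ‖s i.1 - t j.1‖ = 0 := by rw [← hab, h, norm_zero]
      nlinarith
    have hid : (s i.1 - t j.1)⁻¹ - ∑ ν : Fin ρ, (a⁻¹) ^ ((ν : ℕ) + 1) * b ^ (ν : ℕ)
        = (b / a) ^ ρ * (s i.1 - t j.1)⁻¹ := by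
      rw [Fin.sum_univ_eq_sum_range (fun ν => (a⁻¹) ^ (ν + 1) * b ^ ν) ρ, ← hab]
      exact cv_geom_id a b ha0 hab0 ρ
    rw [hid, norm_mul, norm_pow, norm_div, norm_inv]
    have habpos : 0 < ‖a‖ := lt_of_lt_of_le hs3 ha
    have h1 : ‖b‖ / ‖a‖ ≤ θ := by
      rw [div_le_iff₀ habpos]
      nlinarith
    have h2 : (‖b‖ / ‖a‖) ^ ρ ≤ θ ^ ρ :=
      pow_le_pow_left₀ (div_nonneg (norm_nonneg _) (norm_nonneg _)) h1 ρ
    have h3 : (‖s i.1 - t j.1‖)⁻¹ ≤ ((1 - θ) * s3)⁻¹ :=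
      inv_anti₀ hpos hsepij
    rw [div_eq_mul_inv]
    exact mul_le_mul h2 h3 (inv_nonneg.mpr (norm_nonneg _)) (pow_nonneg hθ0 ρ)
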